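/- Let R be a commutative integral domain, let a ≥ 1 be an integer, and let ζ ∈ R be a primitive a-th root of unity (IsPrimitiveRoot ζ a). Let ι be a finite type and M : Matrix ι ι R a square matrix. Then in the polynomial ring R[X]: det(1 − X^a • (M^a).map C) = ∏_{k=0}^{a−1} det(1 − (ζ^k • X) • M.map C), where 1 denotes the identity matrix over R[X], C : R → R[X] is the constant-polynomial ring homomorphism, and • denotes scalar multiplication of a matrix by a polynomial. (Equivalently, det(1 − T^a·φ^a) = ∏_{k=0}^{a−1} det(1 − ζ^k·T·φ) for an endomorphism φ of a finite free R-module.) -/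

import Mathlib

open Polynomial Finset

lemma aux_prod_X_sub (R : Type*) [CommRing R] [IsDomain R] (a : ℕ) (ha : 1 ≤ a)
    (ξ : R) (hξ : IsPrimitiveRoot ξ a) :
    (∏ k ∈ Finset.range a, (X - C (ξ ^ k)) : R[X]) = X ^ a - 1 := by
  have hmonic : ((X : R[X]) ^ a - C 1).Monic := monic_X_pow_sub_C 1 (by omega)
  have hcard : Multiset.card ((X : R[X]) ^ a - C 1).roots = ((X : R[X]) ^ a - C 1).natDegree := by
    rw [natDegree_X_pow_sub_C]
    exact hξ.card_nthRoots_one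
  have h := prod_multiset_X_sub_C_of_monic_of_roots_card_eq hmonic hcard
  have hroots : ((X : R[X]) ^ a - C 1).roots = nthRoots a (1 : R) := rfl
  rw [hroots, hξ.nthRoots_eq (one_pow a)] at h
  rw [C_1] at h
  rw [← h]
  simp [Finset.prod, Finset.range_val, Multiset.map_map, Function.comp]

lemma aux_prod_neg (R : Type*) [CommRing R] [IsDomain R] (a : ℕ) (ha : 1 ≤ a)
    (ξ : R) (hξ : IsPrimitiveRoot ξ a) :
    (∏ k ∈ Finset.range a, (-(ξ ^ k))) = -1 := by
  have h := congrArg (Polynomial.eval (0 : R)) (aux_prod_X_sub R a ha ξ hξ)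
  rw [eval_prod] at h
  simpa [zero_pow (show a ≠ 0 by omega)] using h

lemma aux_core (R : Type*) [CommRing R] [IsDomain R] (a : ℕ) (ha : 1 ≤ a)
    (ζ : R) (hζ : IsPrimitiveRoot ζ a) :
    (∏ k ∈ Finset.range a, (1 - C (ζ ^ k) * X) : R[X]) = 1 - X ^ a := by
  set ξ := ζ ^ (a - 1) with hξdef
  have hcop : Nat.Coprime (a - 1) a := by
    have h : a = (a - 1) + 1 := by omega
    rw [h]; simp
  have hξ : IsPrimitiveRoot ξ a := hζ.pow_of_coprime (a - 1) hcop
  have hinv : ζ * ξ = 1 := by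
    rw [hξdef, ← pow_succ', show a - 1 + 1 = a by omega]
    exact hζ.pow_eq_one
  have hfac : ∀ k, (1 - C (ζ ^ k) * X : R[X]) = (-C (ζ ^ k)) * (X - C (ξ ^ k)) := by
    intro k
    have h1 : (ζ ^ k) * (ξ ^ k) = 1 := by rw [← mul_pow, hinv, one_pow]
    have h2 : (C (ζ ^ k) * C (ξ ^ k) : R[X]) = 1 := by rw [← C_mul, h1, C_1]
    linear_combination -h2
  calc (∏ k ∈ Finset.range a, (1 - C (ζ ^ k) * X) : R[X])
      = ∏ k ∈ Finset.range a, ((-C (ζ ^ k)) * (X - C (ξ ^ k))) :=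
        Finset.prod_congr rfl fun k _ => hfac k
    _ = (∏ k ∈ Finset.range a, (-C (ζ ^ k))) * ∏ k ∈ Finset.range a, (X - C (ξ ^ k)) :=
        Finset.prod_mul_distrib
    _ = 1 - X ^ a := by
        rw [aux_prod_X_sub R a ha ξ hξ]
        have hc : (∏ k ∈ Finset.range a, (-C (ζ ^ k)) : R[X])
            = C (∏ k ∈ Finset.range a, (-(ζ ^ k))) := by
          rw [map_prod]; simp
        rw [hc, aux_prod_neg R a ha ζ hζ, map_neg, map_one]
        ring

lemma aux_core' (R : Type*) [CommRing R] [IsDomain R] (a : ℕ) (ha : 1 ≤ a)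
    (ζ : R) (hζ : IsPrimitiveRoot ζ a) {S : Type*} [CommRing S] (f : R →+* S) (t : S) :
    (∏ k ∈ Finset.range a, (1 - f (ζ ^ k) * t)) = 1 - t ^ a := by
  have h := congrArg (Polynomial.eval₂ f t) (aux_core R a ha ζ hζ)
  simp only [eval₂_finset_prod, eval₂_sub, eval₂_one, eval₂_mul, eval₂_C, eval₂_X,
    eval₂_pow] at h
  exact h

set_option maxHeartbeats 1000000 in
/-- For an endomorphism (given by a square matrix `M`) of a finite free module over an
integral domain `R` containing a primitive `a`-th root of unity `ζ`, one has
`det(1 - T^a • M^a) = ∏_{k=0}^{a-1} det(1 - ζ^k T • M)` in `R[X]`. -/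
theorem det_one_sub_pow_smul_eq_prod_primitiveRoot
    (R : Type*) [CommRing R] [IsDomain R]
    (a : ℕ) (ha : 1 ≤ a) (ζ : R) (hζ : IsPrimitiveRoot ζ a)
    (ι : Type*) [Fintype ι] [DecidableEq ι] (M : Matrix ι ι R) :
    Matrix.det (1 - (Polynomial.X ^ a : Polynomial R) • (M ^ a).map Polynomial.C) =
      ∏ k ∈ Finset.range a,
        Matrix.det (1 - (ζ ^ k • (Polynomial.X : Polynomial R)) • M.map Polynomial.C) := by
  set N : Matrix ι ι R[X] := M.map C with hN
  have hpoly : (∏ k ∈ Finset.range a, (1 - C (ζ ^ k • (X : R[X])) * X) : (R[X])[X]) =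
      1 - (C (X : R[X]) * X) ^ a := by
    have h := aux_core' R a ha ζ hζ (C.comp C : R →+* (R[X])[X]) (C (X : R[X]) * X)
    rw [← h]
    refine Finset.prod_congr rfl fun k _ => ?_
    congr 1
    rw [RingHom.comp_apply, ← mul_assoc, ← C_mul, smul_eq_C_mul]
  rw [← Finset.prod_map_toList] at hpoly
  have hmat := congrArg (Polynomial.aeval N) hpoly
  rw [map_list_prod, List.map_map] at hmat
  have hfac : ∀ k : ℕ, (Polynomial.aeval N) (1 - C (ζ ^ k • (X : R[X])) * X) =
      1 - (ζ ^ k • (X : R[X])) • N := by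
    intro k
    simp only [map_sub, map_one, map_mul, aeval_C, aeval_X]
    rw [Algebra.algebraMap_eq_smul_one, smul_mul_assoc, one_mul]
  have hrhs : (Polynomial.aeval N) (1 - (C (X : R[X]) * X) ^ a) =
      1 - (X : R[X]) ^ a • N ^ a := by
    simp only [map_sub, map_one, map_pow, map_mul, aeval_C, aeval_X]
    rw [Algebra.algebraMap_eq_smul_one, smul_mul_assoc, one_mul, _root_.smul_pow]
  rw [hrhs] at hmat
  have hNpow : N ^ a = (M ^ a).map C := by
    rw [hN, ← RingHom.mapMatrix_apply, ← RingHom.mapMatrix_apply, map_pow]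
  rw [hNpow] at hmat
  have hlist : (List.map (⇑(Polynomial.aeval N) ∘ fun k => 1 - C (ζ ^ k • (X : R[X])) * X)
      (Finset.range a).toList)
      = List.map (fun k => 1 - (ζ ^ k • (X : R[X])) • N) (Finset.range a).toList :=
    List.map_congr_left fun k _ => hfac k
  rw [hlist] at hmat
  rw [← hmat, ← Matrix.coe_detMonoidHom,
    map_list_prod (Matrix.detMonoidHom (n := ι) (R := R[X])) _, List.map_map, ← Finset.prod_map_toList]
  simp [Function.comp, Matrix.coe_detMonoidHom]
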